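/- Let (L, A) be a rational structure with uniqueness on a recursively presented finitely generated group G, and let H ≤ G be an L-rational subgroup, i.e. L_H = L ∩ π^{-1}(H) is a regular language. Then the generalized word problem of G with respect to H is solvable: the set of words over A representing elements of H is decidable. -/

import Mathlib

def evalWord {A G : Type} [Group G] (a : A → G) (w : List A) : G :=
  (w.map a).prod

def IsRegularLang {A : Type} (L : Language A) : Prop :=
  ∃ (σ : Type) (_ : Fintype σ) (M : DFA A σ), M.accepts = L

section Aux

open Nat.Partrec (Code)
open Nat.Partrec.Code

theorem myRePred.comp {α β} [Primcodable α] [Primcodable β] {p : β → Prop} {f : α → β}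
    (hp : REPred p) (hf : Computable f) : REPred fun a => p (f a) :=
  hp.comp hf

theorem myRePred.and {α} [Primcodable α] {p q : α → Prop} (hp : REPred p) (hq : REPred q) :
    REPred fun a => p a ∧ q a := by
  have : Partrec fun a =>
      (Part.assert (p a) fun _ => Part.some ()).bind fun _ =>
        Part.assert (q a) fun _ => Part.some () :=
    hp.bind ((hq.comp Computable.fst).to₂)
  refine this.dom_re.of_eq fun a => ?_
  simp [Part.bind_dom, Part.assert]

set_option maxHeartbeats 2000000 in
theorem myRePred.exists {α β} [Primcodable α] [Primcodable β] {r : α × β → Prop}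
    (h : REPred r) : REPred fun a => ∃ b : β, r (a, b) := by
  obtain ⟨c, hc⟩ := Nat.Partrec.Code.exists_code.1 h
  have hdom : ∀ x : α × β, (eval c (Encodable.encode x)).Dom ↔ r x := by
    intro x
    rw [hc]
    simp [Part.assert]
  classical
  let F : α → ℕ → Option Unit := fun a k =>
    (Encodable.decode (α := β) k.unpair.1).bind fun b =>
      (evaln k.unpair.2 c (Encodable.encode (a, b))).map fun _ => ()
  have hF : Computable₂ F := by
    have h1 : Computable fun p : α × ℕ => (Encodable.decode (α := β) p.2.unpair.1) :=
      Computable.decode.comp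
        ((Primrec.fst.comp (Primrec.unpair.comp Primrec.snd)).to_comp)
    have h2 : Computable fun q : (α × ℕ) × β =>
        evaln q.1.2.unpair.2 c (Encodable.encode (q.1.1, q.2)) := by
      have := primrec_evaln.to_comp
      exact this.comp
        (Computable.pair
          (Computable.pair
            ((Primrec.snd.comp (Primrec.unpair.comp (Primrec.snd.comp Primrec.fst))).to_comp)
            (Computable.const c))
          (Computable.encode.comp
            (Computable.pair (Computable.fst.comp Computable.fst) Computable.snd)))
    exact Computable.option_bind h1
      ((Computable.option_map h2 (Computable.const ()).to₂).to₂)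
  have hg : Partrec fun a => Nat.rfindOpt (F a) := Partrec.rfindOpt hF
  refine hg.dom_re.of_eq fun a => ?_
  rw [Nat.rfindOpt_dom]
  constructor
  · rintro ⟨n, u, hu⟩
    simp only [F, Option.mem_def, Option.bind_eq_some_iff, Option.map_eq_some_iff] at hu
    obtain ⟨b, hb, y, hy, -⟩ := hu
    refine ⟨b, (hdom (a, b)).1 ?_⟩
    rw [Part.dom_iff_mem]
    exact ⟨y, evaln_complete.2 ⟨_, hy⟩⟩
  · rintro ⟨b, hb⟩
    have := (hdom (a, b)).2 hb
    rw [Part.dom_iff_mem] at this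
    obtain ⟨y, hy⟩ := this
    obtain ⟨k, hk⟩ := evaln_complete.1 hy
    refine ⟨Nat.pair (Encodable.encode b) k, (), ?_⟩
    simp only [F, Option.mem_def, Nat.unpair_pair, Encodable.encodek, Option.bind_eq_some_iff]
    exact ⟨b, rfl, by
      rw [Option.mem_def] at hk
      simp only [Option.map_eq_some_iff, ← Encodable.encode_prod_val]
      exact ⟨y, hk, trivial⟩⟩

theorem regLang_computable {A : Type} [Fintype A] [Primcodable A] {L : Language A}
    (h : IsRegularLang L) : ComputablePred (fun w : List A => w ∈ L) := by
  classical
  obtain ⟨σ, hfin, M, hM⟩ := h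
  let e : σ ≃ Fin (Fintype.card σ) := hfin.equivFin σ
  let step : Fin (Fintype.card σ) × A → Fin (Fintype.card σ) :=
    fun p => e (M.step (e.symm p.1) p.2)
  let f : List A → Fin (Fintype.card σ) :=
    fun w => w.foldl (fun s x => step (s, x)) (e M.start)
  let g : Fin (Fintype.card σ) → Bool := fun s => decide (e.symm s ∈ M.accept)
  have hf : Primrec f :=
    Primrec.list_foldl Primrec.id (Primrec.const (e M.start))
      ((Primrec.dom_finite step).comp Primrec.snd).to₂
  have hcomp : Computable fun w : List A => g (f w) :=
    ((Primrec.dom_finite g).comp hf).to_comp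
  have key : ∀ (w : List A) (s : σ), e.symm (w.foldl (fun t x => step (t, x)) (e s))
      = M.evalFrom s w := by
    intro w
    induction w with
    | nil => intro s; simp [DFA.evalFrom]
    | cons x t ih =>
      intro s
      simp only [List.foldl_cons, step, Equiv.symm_apply_apply]
      exact ih (M.step s x)
  rw [ComputablePred.computable_iff]
  refine ⟨fun w => g (f w), hcomp, funext fun w => ?_⟩
  have : w ∈ L ↔ M.evalFrom M.start w ∈ M.accept := by
    rw [← hM]; exact M.mem_accepts
  simp only [g, f, key w M.start, this]
  simp

theorem evalWord_append {A G : Type} [Group G] (a : A → G) (u v : List A) :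
    evalWord a (u ++ v) = evalWord a u * evalWord a v := by
  simp [evalWord]

theorem evalWord_exists_inv {A G : Type} [Group G] (a : A → G)
    (hinv : ∀ x : A, ∃ y : A, a y = (a x)⁻¹) :
    ∀ w : List A, ∃ v : List A, evalWord a v = (evalWord a w)⁻¹ := by
  intro w
  induction w with
  | nil => exact ⟨[], by simp [evalWord]⟩
  | cons x t ih =>
    obtain ⟨v, hv⟩ := ih
    obtain ⟨y, hy⟩ := hinv x
    refine ⟨v ++ [y], ?_⟩
    rw [evalWord_append, hv]
    simp [evalWord, hy, mul_inv_rev]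

end Aux

/-- If `(L,A)` is a rational structure with uniqueness on a recursively presented finitely
generated group `G` and `H` is an `L`-rational subgroup, then the generalized word problem of
`G` with respect to `H` is solvable. -/
theorem generalized_word_problem_solvable_of_rational_subgroup
    {A G : Type} [Fintype A] [Primcodable A] [Group G] (a : A → G)
    (hinv : ∀ x : A, ∃ y : A, a y = (a x)⁻¹)
    (hrecpres : REPred (fun w : List A => evalWord a w = 1))
    (L : Language A) (hreg : IsRegularLang L)
    (hbij : ∀ g : G, ∃! w, w ∈ L ∧ evalWord a w = g)
    (H : Subgroup G)
    (hrat : IsRegularLang {w | w ∈ L ∧ evalWord a w ∈ H}) :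
    ComputablePred (fun w : List A => evalWord a w ∈ H) := by
  classical
  have hL : ComputablePred (fun w : List A => w ∈ L) := regLang_computable hreg
  have hLH : ComputablePred (fun w : List A => w ∈ L ∧ evalWord a w ∈ H) :=
    regLang_computable hrat
  -- computable projections
  have hc1 : Computable (fun x : List A × (List A × List A) => x.2.1) :=
    Computable.fst.comp Computable.snd
  have hc2 : Computable (fun x : List A × (List A × List A) => x.2.1 ++ x.2.2) :=
    (Primrec.list_append.comp (Primrec.fst.comp Primrec.snd)
      (Primrec.snd.comp Primrec.snd)).to_comp
  have hc3 : Computable (fun x : List A × (List A × List A) => x.1 ++ x.2.2) :=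
    (Primrec.list_append.comp Primrec.fst (Primrec.snd.comp Primrec.snd)).to_comp
  rw [ComputablePred.computable_iff_re_compl_re']
  constructor
  · -- `evalWord a w ∈ H` is r.e.
    have hr : REPred (fun x : List A × (List A × List A) =>
        (x.2.1 ∈ L ∧ evalWord a x.2.1 ∈ H) ∧
          evalWord a (x.2.1 ++ x.2.2) = 1 ∧ evalWord a (x.1 ++ x.2.2) = 1) :=
      myRePred.and (myRePred.comp hLH.to_re hc1)
        (myRePred.and (myRePred.comp hrecpres hc2) (myRePred.comp hrecpres hc3))
    refine (myRePred.exists hr).of_eq fun w => ?_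
    constructor
    · rintro ⟨⟨u, v⟩, ⟨-, huH⟩, h1, h2⟩
      rw [evalWord_append] at h1 h2
      have e1 : evalWord a u = (evalWord a v)⁻¹ := mul_eq_one_iff_eq_inv.1 h1
      have e2 : evalWord a w = (evalWord a v)⁻¹ := mul_eq_one_iff_eq_inv.1 h2
      rw [e2, ← e1]
      exact huH
    · intro hw
      obtain ⟨u, ⟨huL, hue⟩, -⟩ := hbij (evalWord a w)
      obtain ⟨v, hv⟩ := evalWord_exists_inv a hinv w
      refine ⟨(u, v), ⟨huL, hue ▸ hw⟩, ?_, ?_⟩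
      · rw [evalWord_append, hue, hv, mul_inv_cancel]
      · rw [evalWord_append, hv, mul_inv_cancel]
  · -- `evalWord a w ∉ H` is r.e.
    have hr : REPred (fun x : List A × (List A × List A) =>
        (x.2.1 ∈ L ∧ ¬(x.2.1 ∈ L ∧ evalWord a x.2.1 ∈ H)) ∧
          evalWord a (x.2.1 ++ x.2.2) = 1 ∧ evalWord a (x.1 ++ x.2.2) = 1) :=
      myRePred.and
        (myRePred.and (myRePred.comp hL.to_re hc1) (myRePred.comp (p := fun u : List A => ¬(u ∈ L ∧ evalWord a u ∈ H)) hLH.not.to_re hc1))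
        (myRePred.and (myRePred.comp hrecpres hc2) (myRePred.comp hrecpres hc3))
    refine (myRePred.exists hr).of_eq fun w => ?_
    constructor
    · rintro ⟨⟨u, v⟩, ⟨huL, hun⟩, h1, h2⟩
      rw [evalWord_append] at h1 h2
      have e1 : evalWord a u = (evalWord a v)⁻¹ := mul_eq_one_iff_eq_inv.1 h1
      have e2 : evalWord a w = (evalWord a v)⁻¹ := mul_eq_one_iff_eq_inv.1 h2
      rw [e2, ← e1]
      intro hmem
      exact hun ⟨huL, hmem⟩
    · intro hw
      obtain ⟨u, ⟨huL, hue⟩, -⟩ := hbij (evalWord a w)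
      obtain ⟨v, hv⟩ := evalWord_exists_inv a hinv w
      refine ⟨(u, v), ⟨huL, fun hmem => hw (hue ▸ hmem.2)⟩, ?_, ?_⟩
      · rw [evalWord_append, hue, hv, mul_inv_cancel]
      · rw [evalWord_append, hv, mul_inv_cancel]
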